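/- (John–Nirenberg–Strömberg type lemma.) Let Δ = ⋃_{n≥0} Δₙ be a dyadic filtration on a measure space (Y, μ) and let α : Δ → [0,∞). Suppose there exist N > 0 and η > 0 such that for every Q₀ ∈ Δ, μ({x ∈ Q₀ : Σ_{Q ∈ Δ, x ∈ Q, Q ⊆ Q₀} α(Q) ≤ N}) ≥ η·μ(Q₀). Then there is a constant C depending only on N and η (one may take C = N/η²) such that for every Q₀ ∈ Δ, Σ_{Q ∈ Δ, Q ⊆ Q₀} α(Q)·μ(Q) ≤ C·μ(Q₀). -/

import Mathlib

open MeasureTheory Set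
open scoped ENNReal Classical

/-- A dyadic filtration `Δ = ⋃_{n ≥ 0} Δₙ` on a measure space `(Y, μ)`: each `Δₙ` is a
countable collection of pairwise disjoint measurable sets of positive finite measure,
covering `Y` up to a null set, and every `Q ∈ Δₙ₊₁` is contained in some `Q' ∈ Δₙ`. -/
def IsDyadicFiltration {Y : Type*} [MeasurableSpace Y] (μ : Measure Y)
    (Δ : ℕ → Set (Set Y)) : Prop :=
  (∀ n, (Δ n).Countable) ∧
  (∀ n, (Δ n).PairwiseDisjoint id) ∧
  (∀ n, ∀ Q ∈ Δ n, MeasurableSet Q ∧ 0 < μ Q ∧ μ Q < ⊤) ∧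
  (∀ n, μ (univ \ ⋃₀ Δ n) = 0) ∧
  (∀ n, ∀ Q ∈ Δ (n + 1), ∃ Q' ∈ Δ n, Q ⊆ Q')

/-- The sum `Σ_{Q ∋ x, Q ⊆ S} α(Q)` over all cubes of the filtration. -/
noncomputable def jnsF {Y : Type*} (Δ : ℕ → Set (Set Y)) (α : Set Y → ℝ≥0∞)
    (S : Set Y) (x : Y) : ℝ≥0∞ :=
  ∑' m : ℕ, ∑' Q : Δ m, if x ∈ (Q : Set Y) ∧ (Q : Set Y) ⊆ S then α Q else 0

/-- The good set of `S`. -/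
noncomputable def jnsG {Y : Type*} (Δ : ℕ → Set (Set Y)) (α : Set Y → ℝ≥0∞)
    (N : ℝ) (S : Set Y) : Set Y :=
  {x ∈ S | jnsF Δ α S x ≤ ENNReal.ofReal N}

theorem jns_setm {Y : Type*} [MeasurableSpace Y] (Δ : ℕ → Set (Set Y))
    (hmeasall : ∀ m, ∀ Q ∈ Δ m, MeasurableSet Q)
    (S : Set Y) (m : ℕ) (Q : Δ m) :
    MeasurableSet {x | x ∈ (Q : Set Y) ∧ (Q : Set Y) ⊆ S} := by
  by_cases h : (Q : Set Y) ⊆ S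
  · have : {x | x ∈ (Q : Set Y) ∧ (Q : Set Y) ⊆ S} = (Q : Set Y) := by
      ext x; simp [h]
    rw [this]; exact hmeasall m Q Q.2
  · have : {x | x ∈ (Q : Set Y) ∧ (Q : Set Y) ⊆ S} = (∅ : Set Y) := by
      ext x; simp [h]
    rw [this]; exact MeasurableSet.empty

theorem jnsF_measurable {Y : Type*} [MeasurableSpace Y] (Δ : ℕ → Set (Set Y))
    (hcnt : ∀ n, (Δ n).Countable)
    (hmeasall : ∀ m, ∀ Q ∈ Δ m, MeasurableSet Q)
    (α : Set Y → ℝ≥0∞) (S : Set Y) :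
    Measurable (jnsF Δ α S) := by
  haveI : ∀ m, Countable ↥(Δ m) := fun m => (hcnt m).to_subtype
  unfold jnsF
  refine Measurable.ennreal_tsum fun m => Measurable.ennreal_tsum fun Q => ?_
  exact Measurable.ite (jns_setm Δ hmeasall S m Q) measurable_const measurable_const

theorem jnsG_measurable {Y : Type*} [MeasurableSpace Y] (Δ : ℕ → Set (Set Y))
    (hcnt : ∀ n, (Δ n).Countable)
    (hmeasall : ∀ m, ∀ Q ∈ Δ m, MeasurableSet Q)
    (α : Set Y → ℝ≥0∞) (N : ℝ) (m : ℕ) (Q : Set Y) (hQ : Q ∈ Δ m) :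
    MeasurableSet (jnsG Δ α N Q) := by
  have : jnsG Δ α N Q = Q ∩ (jnsF Δ α Q) ⁻¹' (Set.Iic (ENNReal.ofReal N)) := by
    ext x; simp [jnsG]
  rw [this]
  exact (hmeasall m Q hQ).inter
    ((jnsF_measurable Δ hcnt hmeasall α Q) measurableSet_Iic)

/-- John–Nirenberg–Strömberg type lemma. -/
theorem john_nirenberg_stromberg {Y : Type*} [MeasurableSpace Y] (μ : Measure Y)
    (Δ : ℕ → Set (Set Y)) (hΔ : IsDyadicFiltration μ Δ)
    (α : Set Y → ℝ≥0∞) (N η : ℝ) (hN : 0 < N) (hη : 0 < η)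
    (hyp : ∀ n, ∀ Q₀ ∈ Δ n,
      ENNReal.ofReal η * μ Q₀ ≤
        μ {x ∈ Q₀ |
            (∑' m : ℕ, ∑' Q : Δ m,
                if x ∈ (Q : Set Y) ∧ (Q : Set Y) ⊆ Q₀ then α Q else 0)
              ≤ ENNReal.ofReal N}) :
    ∀ n, ∀ Q₀ ∈ Δ n,
      (∑' m : ℕ, ∑' Q : Δ m, if (Q : Set Y) ⊆ Q₀ then α Q * μ Q else 0)
        ≤ ENNReal.ofReal (N / η ^ 2) * μ Q₀ := by
  obtain ⟨hcnt, hdisj, hmeas, -, hnest⟩ := hΔ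
  haveI : ∀ m, Countable ↥(Δ m) := fun m => (hcnt m).to_subtype
  have hmeasall : ∀ m, ∀ Q ∈ Δ m, MeasurableSet Q := fun m Q hQ => (hmeas m Q hQ).1
  have hη0 : ENNReal.ofReal η ≠ 0 := (ENNReal.ofReal_pos.mpr hη).ne'
  have hηtop : ENNReal.ofReal η ≠ ⊤ := ENNReal.ofReal_ne_top
  -- same-level cubes containing a common point are equal
  have samelevel : ∀ m, ∀ Q ∈ Δ m, ∀ Q' ∈ Δ m, ∀ x, x ∈ Q → x ∈ Q' → Q = Q' := by
    intro m Q hQ Q' hQ' x hx hx'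
    exact (hdisj m).elim hQ hQ' (Set.not_disjoint_iff.mpr ⟨x, hx, hx'⟩)
  -- nested: a deeper cube containing a common point is contained in a shallow one
  have nestedk : ∀ k m, ∀ Q ∈ Δ m, ∀ Q' ∈ Δ (m + k), ∀ x, x ∈ Q → x ∈ Q' → Q' ⊆ Q := by
    intro k
    induction k with
    | zero =>
      intro m Q hQ Q' hQ' x hx hx'
      rw [samelevel m Q hQ Q' hQ' x hx hx']
    | succ k ih =>
      intro m Q hQ Q' hQ' x hx hx'
      obtain ⟨Q'', hQ'', hsub⟩ := hnest (m + k) Q' hQ'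
      exact hsub.trans (ih m Q hQ Q'' hQ'' x hx (hsub hx'))
  have nested : ∀ m n, m ≤ n → ∀ Q ∈ Δ m, ∀ Q' ∈ Δ n, ∀ x, x ∈ Q → x ∈ Q' → Q' ⊆ Q := by
    intro m n hmn Q hQ Q' hQ' x hx hx'
    obtain ⟨k, rfl⟩ := Nat.exists_eq_add_of_le hmn
    exact nestedk k m Q hQ Q' hQ' x hx hx'
  intro n Q₀ hQ₀
  have hQ₀m : MeasurableSet Q₀ := (hmeas n Q₀ hQ₀).1
  -- η ≤ 1
  have hη1 : η ≤ 1 := by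
    have h1 := hyp n Q₀ hQ₀
    have h2 : μ {x ∈ Q₀ |
        (∑' m : ℕ, ∑' Q : Δ m,
            if x ∈ (Q : Set Y) ∧ (Q : Set Y) ⊆ Q₀ then α Q else 0)
          ≤ ENNReal.ofReal N} ≤ μ Q₀ := measure_mono (Set.sep_subset _ _)
    have h3 : ENNReal.ofReal η * μ Q₀ ≤ 1 * μ Q₀ := by
      rw [one_mul]; exact h1.trans h2
    have := (ENNReal.mul_le_mul_iff_left (hmeas n Q₀ hQ₀).2.1.ne' (hmeas n Q₀ hQ₀).2.2.ne).mp h3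
    exact ENNReal.ofReal_le_one.mp this
  -- measure lower bound restated with jnsG
  have hμG : ∀ m, ∀ Q : Δ m, μ (Q : Set Y) ≤ (ENNReal.ofReal η)⁻¹ * μ (jnsG Δ α N Q) := by
    intro m Q
    have h := hyp m Q Q.2
    have h' : ENNReal.ofReal η * μ (Q : Set Y) ≤ μ (jnsG Δ α N Q) := h
    calc μ (Q : Set Y) = (ENNReal.ofReal η)⁻¹ * (ENNReal.ofReal η * μ (Q : Set Y)) := by
          rw [← mul_assoc, ENNReal.inv_mul_cancel hη0 hηtop, one_mul]
      _ ≤ (ENNReal.ofReal η)⁻¹ * μ (jnsG Δ α N Q) := mul_le_mul_right h' _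
  -- key pointwise bound
  have key : ∀ x : Y,
      (∑' m : ℕ, ∑' Q : Δ m, if (Q : Set Y) ⊆ Q₀ ∧ x ∈ jnsG Δ α N Q then α Q else 0)
        ≤ Q₀.indicator (fun _ => ENNReal.ofReal N) x := by
    intro x
    by_cases hA : ∃ m : ℕ, ∃ Q : Δ m, (Q : Set Y) ⊆ Q₀ ∧ x ∈ jnsG Δ α N Q
    · set m0 := Nat.find hA with hm0
      obtain ⟨Qs, hQssub, hxGs⟩ := Nat.find_spec hA
      have hxQs : x ∈ (Qs : Set Y) := hxGs.1
      have hxQ₀ : x ∈ Q₀ := hQssub hxQs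
      rw [Set.indicator_of_mem hxQ₀]
      calc (∑' m : ℕ, ∑' Q : Δ m, if (Q : Set Y) ⊆ Q₀ ∧ x ∈ jnsG Δ α N Q then α Q else 0)
          ≤ jnsF Δ α Qs x := by
            unfold jnsF
            refine ENNReal.tsum_le_tsum fun m => ENNReal.tsum_le_tsum fun Q => ?_
            by_cases h : (Q : Set Y) ⊆ Q₀ ∧ x ∈ jnsG Δ α N Q
            · rw [if_pos h]
              have hm : m0 ≤ m := Nat.find_min' hA ⟨Q, h⟩
              have hxQ : x ∈ (Q : Set Y) := h.2.1
              have hsub : (Q : Set Y) ⊆ (Qs : Set Y) :=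
                nested m0 m hm Qs Qs.2 Q Q.2 x hxQs hxQ
              rw [if_pos ⟨hxQ, hsub⟩]
            · rw [if_neg h]; exact zero_le
        _ ≤ ENNReal.ofReal N := hxGs.2
    · push_neg at hA
      have hz : ∀ (m : ℕ) (Q : Δ m),
          (if (Q : Set Y) ⊆ Q₀ ∧ x ∈ jnsG Δ α N Q then α Q else 0) = 0 := by
        intro m Q
        exact if_neg fun h => hA m Q h.1 h.2
      simp only [hz, tsum_zero]
      exact zero_le
  -- main chain
  calc (∑' m : ℕ, ∑' Q : Δ m, if (Q : Set Y) ⊆ Q₀ then α Q * μ Q else 0)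
      ≤ ∑' m : ℕ, ∑' Q : Δ m,
          (ENNReal.ofReal η)⁻¹ * (if (Q : Set Y) ⊆ Q₀ then α Q * μ (jnsG Δ α N Q) else 0) := by
        refine ENNReal.tsum_le_tsum fun m => ENNReal.tsum_le_tsum fun Q => ?_
        by_cases h : (Q : Set Y) ⊆ Q₀
        · rw [if_pos h, if_pos h]
          calc α (Q : Set Y) * μ (Q : Set Y)
              ≤ α (Q : Set Y) * ((ENNReal.ofReal η)⁻¹ * μ (jnsG Δ α N Q)) :=
                mul_le_mul_right (hμG m Q) _
            _ = (ENNReal.ofReal η)⁻¹ * (α (Q : Set Y) * μ (jnsG Δ α N Q)) := by ring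
        · rw [if_neg h, if_neg h, mul_zero]
    _ = (ENNReal.ofReal η)⁻¹ *
          ∑' m : ℕ, ∑' Q : Δ m, (if (Q : Set Y) ⊆ Q₀ then α Q * μ (jnsG Δ α N Q) else 0) := by
        simp_rw [ENNReal.tsum_mul_left]
    _ = (ENNReal.ofReal η)⁻¹ *
          ∑' m : ℕ, ∑' Q : Δ m,
            ∫⁻ x, (if (Q : Set Y) ⊆ Q₀ ∧ x ∈ jnsG Δ α N Q then α Q else 0) ∂μ := by
        congr 1
        refine tsum_congr fun m => tsum_congr fun Q => ?_
        by_cases h : (Q : Set Y) ⊆ Q₀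
        · simp only [h, if_true, true_and]
          have heq : (fun x => if x ∈ jnsG Δ α N Q then α (Q : Set Y) else 0)
              = (jnsG Δ α N Q).indicator (fun _ => α (Q : Set Y)) := by
            ext x; by_cases hx : x ∈ jnsG Δ α N Q <;> simp [Set.indicator, hx]
          rw [heq]
          exact (lintegral_indicator_const (jnsG_measurable Δ hcnt hmeasall α N m Q Q.2)
            (α (Q : Set Y))).symm
        · simp only [h, if_false, false_and, lintegral_zero]
    _ = (ENNReal.ofReal η)⁻¹ *
          ∫⁻ x, (∑' m : ℕ, ∑' Q : Δ m,
            if (Q : Set Y) ⊆ Q₀ ∧ x ∈ jnsG Δ α N Q then α Q else 0) ∂μ := by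
        congr 1
        have hm1 : ∀ (m : ℕ) (Q : Δ m),
            Measurable (fun x => if (Q : Set Y) ⊆ Q₀ ∧ x ∈ jnsG Δ α N Q then α (Q : Set Y) else 0) := by
          intro m Q
          by_cases h : (Q : Set Y) ⊆ Q₀
          · simp only [h, true_and]
            exact Measurable.ite (jnsG_measurable Δ hcnt hmeasall α N m Q Q.2)
              measurable_const measurable_const
          · simp only [h, false_and, if_false]
            exact measurable_const
        rw [lintegral_tsum fun m => ((Measurable.ennreal_tsum fun Q => hm1 m Q).aemeasurable)]
        exact tsum_congr fun m => (lintegral_tsum fun Q => (hm1 m Q).aemeasurable).symm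
    _ ≤ (ENNReal.ofReal η)⁻¹ * ∫⁻ x, Q₀.indicator (fun _ => ENNReal.ofReal N) x ∂μ :=
        mul_le_mul_right (lintegral_mono key) _
    _ = (ENNReal.ofReal η)⁻¹ * (ENNReal.ofReal N * μ Q₀) := by
        congr 1
        exact lintegral_indicator_const hQ₀m _
    _ ≤ ENNReal.ofReal (N / η ^ 2) * μ Q₀ := by
        rw [← mul_assoc]
        refine mul_le_mul_left ?_ _
        have h1 : (ENNReal.ofReal η)⁻¹ * ENNReal.ofReal N = ENNReal.ofReal (N / η) := by
          rw [ENNReal.ofReal_div_of_pos hη, div_eq_mul_inv, mul_comm]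
        rw [h1]
        refine ENNReal.ofReal_le_ofReal ?_
        have hη2 : (0:ℝ) < η ^ 2 := by positivity
        have : η ^ 2 ≤ η := by nlinarith
        exact div_le_div_of_nonneg_left hN.le hη2 this |>.trans_eq rfl
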